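/- arXiv:1605.04764 — 3 statements merged into one kernel-verified Lean document; each statement's English description precedes it below -/
import Mathlib

section
/- (Correctness of the ternary tessellation projection, Lemma 1 of the paper.) Let z ∈ ℝ^k be nonzero. Then max over a ∈ Γ of ⟨a, z⟩ equals max over t ∈ {1,…,k} of (1/√t) · ∑_{i=1}^{t} |z|_{(i)}, where |z|_{(1)} ≥ ⋯ ≥ |z|_{(k)} is the decreasing rearrangement of (|z_1|,…,|z_k|). Consequently, min over a ∈ Γ of the angular distance d(a, z) equals 1 − (1/‖z‖₂) · max over t ∈ {1,…,k} of (1/√t) · ∑_{i=1}^{t} |z|_{(i)}. -/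
open Finset

/-- Euclidean inner product on `Fin k → ℝ`. -/
def euclInner {k : ℕ} (x y : Fin k → ℝ) : ℝ := ∑ i, x i * y i

/-- Euclidean norm on `Fin k → ℝ`. -/
noncomputable def euclNorm {k : ℕ} (x : Fin k → ℝ) : ℝ := Real.sqrt (∑ i, x i ^ 2)

/-- Angular distance `d(x, y) = 1 − ⟨x, y⟩/(‖x‖₂ ‖y‖₂)`. -/
noncomputable def angDist {k : ℕ} (x y : Fin k → ℝ) : ℝ :=
  1 - euclInner x y / (euclNorm x * euclNorm y)

/-- The ternary tessellating set `Γ = { a/‖a‖₂ : a ∈ {-1,0,1}^k, a ≠ 0 }`. -/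
noncomputable def Gamma (k : ℕ) : Set (Fin k → ℝ) :=
  {v | ∃ a : Fin k → ℝ, (∀ i, a i ∈ ({-1, 0, 1} : Set ℝ)) ∧ a ≠ 0 ∧
    v = (euclNorm a)⁻¹ • a}

lemma orderEmb_le {s k : ℕ} (e : Fin s ↪o Fin k) (j : Fin s) : (j : ℕ) ≤ (e j : ℕ) := by
  have h : (Finset.Iio j).card ≤ (Finset.Iio (e j)).card := by
    apply Finset.card_le_card_of_injOn (fun i => e i)
    · intro i hi
      simp only [Finset.mem_Iio] at *
      exact by simpa using e.strictMono (by simpa using hi : i < j)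
    · intro a _ b _ hab; exact e.injective hab
  simpa [Fin.card_Iio] using h

lemma sum_filter_lt_eq {k t : ℕ} (ht : t ≤ k) (F : Fin k → ℝ) :
    ∑ i ∈ Finset.univ.filter (fun i : Fin k => (i : ℕ) < t), F i
      = ∑ j : Fin t, F (Fin.castLE ht j) := by
  symm
  apply Finset.sum_nbij (fun j => Fin.castLE ht j)
  · intro a _; simp [a.isLt]
  · intro a _ b _ hab
    exact Fin.castLE_injective ht hab
  · intro a ha
    simp only [Finset.coe_filter, Set.mem_setOf_eq, Finset.mem_univ, true_and] at ha
    exact ⟨⟨(a : ℕ), ha⟩, by simp, rfl⟩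
  · intro a _; rfl

lemma sum_le_initial {k : ℕ} (g : Fin k → ℝ) (hg : Antitone g) (B : Finset (Fin k)) :
    ∑ i ∈ B, g i ≤ ∑ i ∈ Finset.univ.filter (fun i : Fin k => (i : ℕ) < B.card), g i := by
  set s := B.card with hs
  have hsk : s ≤ k := by simpa using B.card_le_univ
  have h1 : ∑ i ∈ B, g i = ∑ j : Fin s, g (B.orderEmbOfFin hs.symm j) := by
    rw [← Finset.sum_image (f := g) (g := B.orderEmbOfFin hs.symm) (by
      intro a _ b _ h; exact (B.orderEmbOfFin hs.symm).injective h)]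
    congr 1
    refine (Finset.eq_of_subset_of_card_le ?_ ?_).symm
    · intro x hx
      simp only [Finset.mem_image] at hx
      obtain ⟨j, _, rfl⟩ := hx
      exact Finset.orderEmbOfFin_mem _ _ _
    · rw [Finset.card_image_of_injective _ (B.orderEmbOfFin hs.symm).injective]
      simp [hs]
  rw [h1, sum_filter_lt_eq hsk]
  apply Finset.sum_le_sum
  intro j _
  apply hg
  have := orderEmb_le (B.orderEmbOfFin hs.symm) j
  exact Fin.le_def.mpr (by simpa using this)

lemma euclNorm_pos {k : ℕ} {x : Fin k → ℝ} (hx : x ≠ 0) : 0 < euclNorm x := by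
  obtain ⟨i, hi⟩ := Function.ne_iff.mp hx
  have h1 : (0:ℝ) < ∑ j, x j ^ 2 := by
    have h2 : x i ^ 2 ≤ ∑ j, x j ^ 2 :=
      Finset.single_le_sum (fun j _ => sq_nonneg (x j)) (Finset.mem_univ i)
    have h3 : (0:ℝ) < x i ^ 2 :=
      lt_of_le_of_ne (sq_nonneg _) (Ne.symm (pow_ne_zero 2 hi))
    linarith
  exact Real.sqrt_pos.mpr h1

lemma euclNorm_unit {k : ℕ} {a : Fin k → ℝ} (ha : a ≠ 0) :
    euclNorm ((euclNorm a)⁻¹ • a) = 1 := by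
  have hpos := euclNorm_pos ha
  have hS : (0:ℝ) < ∑ j, a j ^ 2 := by
    have := Real.sqrt_pos.mp (by simpa [euclNorm] using hpos)
    exact this
  unfold euclNorm at *
  have h1 : ∑ i, ((Real.sqrt (∑ j, a j ^ 2))⁻¹ • a) i ^ 2
      = (Real.sqrt (∑ j, a j ^ 2))⁻¹ ^ 2 * ∑ i, a i ^ 2 := by
    rw [Finset.mul_sum]
    apply Finset.sum_congr rfl
    intro i _
    simp [Pi.smul_apply, smul_eq_mul, mul_pow]
  have h2 : (Real.sqrt (∑ j, a j ^ 2))⁻¹ ^ 2 * ∑ i, a i ^ 2 = 1 := by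
    rw [inv_pow, Real.sq_sqrt hS.le]
    field_simp
  rw [h1, h2, Real.sqrt_one]

/-- Lemma 1 of the paper: for nonzero `z`, the maximum of `⟨a, z⟩` over `a ∈ Γ`
equals the maximum over `t ∈ {1,…,k}` of `(1/√t)·∑_{i=1}^t |z|_{(i)}` (decreasing rearrangement
given via a permutation `σ` with `i ↦ |z (σ i)|` antitone); consequently the minimum of the
angular distance `d(a, z)` over `a ∈ Γ` equals `1 − M/‖z‖₂` for that common maximum `M`. -/
theorem stmt_2 {k : ℕ} (z : Fin k → ℝ) (hz : z ≠ 0)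
    (σ : Equiv.Perm (Fin k)) (hσ : Antitone fun i => |z (σ i)|) :
    ∃ M : ℝ,
      IsGreatest {x : ℝ | ∃ a ∈ Gamma k, x = euclInner a z} M ∧
      IsGreatest {x : ℝ | ∃ t ∈ Finset.Icc 1 k, x =
        (1 / Real.sqrt t) *
          ∑ i ∈ Finset.univ.filter (fun i : Fin k => (i : ℕ) < t), |z (σ i)|} M ∧
      IsLeast {x : ℝ | ∃ a ∈ Gamma k, x = angDist a z} (1 - M / euclNorm z) := by
  classical
  have hk : 0 < k := by
    rcases Nat.eq_zero_or_pos k with h | h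
    · subst h; exact absurd (funext fun i => i.elim0) hz
    · exact h
  set S : ℕ → ℝ := fun t => ∑ i ∈ Finset.univ.filter (fun i : Fin k => (i : ℕ) < t),
    |z (σ i)| with hSdef
  set f : ℕ → ℝ := fun t => (1 / Real.sqrt t) * S t with hfdef
  have hT : (Finset.Icc 1 k).Nonempty := ⟨1, Finset.mem_Icc.mpr ⟨le_refl 1, hk⟩⟩
  obtain ⟨t0, ht0T, ht0max⟩ := Finset.exists_max_image (Finset.Icc 1 k) f hT
  obtain ⟨ht01, ht0k⟩ := Finset.mem_Icc.mp ht0T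
  have hg1 : IsGreatest {x : ℝ | ∃ a ∈ Gamma k, x = euclInner a z} (f t0) := by
    have hub1 : ∀ x ∈ {x : ℝ | ∃ a ∈ Gamma k, x = euclInner a z}, x ≤ f t0 := by
      rintro x ⟨v, ⟨a, ha, ha0, rfl⟩, rfl⟩
      set supp := Finset.univ.filter (fun j => a j ≠ 0) with hsupp
      have hs1 : 1 ≤ supp.card := by
        obtain ⟨j, hj⟩ := Function.ne_iff.mp ha0
        exact Finset.card_pos.mpr ⟨j, by simpa [hsupp] using hj⟩
      have hsk : supp.card ≤ k := by simpa using supp.card_le_univ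
      have hsum2 : ∑ j, a j ^ 2 = (supp.card : ℝ) := by
        rw [← Finset.sum_subset (Finset.subset_univ supp) (by
          intro j _ hj
          simp only [hsupp, Finset.mem_filter, Finset.mem_univ, true_and, not_not] at hj
          simp [hj])]
        rw [Finset.sum_congr rfl (g := fun _ => (1:ℝ)) (fun j hj => by
          simp only [hsupp, Finset.mem_filter] at hj
          have h := ha j
          simp only [Set.mem_insert_iff, Set.mem_singleton_iff] at h
          rcases h with h | h | h <;> simp [h] at hj ⊢)]
        simp
      have hnorm : euclNorm a = Real.sqrt supp.card := by rw [euclNorm, hsum2]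
      have hq0 : (0:ℝ) ≤ (Real.sqrt supp.card)⁻¹ := by positivity
      have hinner : euclInner ((euclNorm a)⁻¹ • a) z
          = (Real.sqrt supp.card)⁻¹ * ∑ j, a j * z j := by
        rw [hnorm, euclInner, Finset.mul_sum]
        exact Finset.sum_congr rfl fun j _ => by
          simp [Pi.smul_apply, smul_eq_mul, mul_assoc]
      have hstep : ∑ j, a j * z j ≤ ∑ j ∈ supp, |z j| := by
        rw [← Finset.sum_subset (Finset.subset_univ supp) (by
          intro j _ hj
          simp only [hsupp, Finset.mem_filter, Finset.mem_univ, true_and, not_not] at hj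
          simp [hj])]
        apply Finset.sum_le_sum
        intro j hj
        simp only [hsupp, Finset.mem_filter] at hj
        have h1 : |a j| = 1 := by
          have h := ha j
          simp only [Set.mem_insert_iff, Set.mem_singleton_iff] at h
          rcases h with h | h | h <;> simp [h] at hj ⊢
        calc a j * z j ≤ |a j * z j| := le_abs_self _
          _ = |a j| * |z j| := abs_mul _ _
          _ = |z j| := by rw [h1, one_mul]
      have hstep2 : ∑ j ∈ supp, |z j| ≤ S supp.card := by
        have hco : (supp.image σ.symm).card = supp.card :=
          Finset.card_image_of_injective _ σ.symm.injective
        have him : ∑ i ∈ supp.image σ.symm, |z (σ i)| = ∑ j ∈ supp, |z j| := by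
          rw [Finset.sum_image (by intro a _ b _ h; exact σ.symm.injective h)]
          exact Finset.sum_congr rfl fun j _ => by simp
        have := sum_le_initial (fun i => |z (σ i)|) hσ (supp.image σ.symm)
        rw [him, hco] at this
        exact this
      calc euclInner ((euclNorm a)⁻¹ • a) z
          = (Real.sqrt supp.card)⁻¹ * ∑ j, a j * z j := hinner
        _ ≤ (Real.sqrt supp.card)⁻¹ * S supp.card := by
            apply mul_le_mul_of_nonneg_left _ hq0
            exact le_trans hstep hstep2
        _ = f supp.card := by rw [hfdef]; simp [one_div, hSdef]
        _ ≤ f t0 := ht0max _ (Finset.mem_Icc.mpr ⟨hs1, hsk⟩)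
    constructor
    · -- membership: construct the maximizer
      set a : Fin k → ℝ := fun j =>
        if ((σ.symm j : Fin k) : ℕ) < t0 then (if z j < 0 then -1 else 1) else 0 with hadef
      have ha : ∀ i, a i ∈ ({-1, 0, 1} : Set ℝ) := by
        intro i
        by_cases h1 : ((σ.symm i : Fin k) : ℕ) < t0 <;>
          by_cases h2 : z i < 0 <;> simp [hadef, h1, h2]
      have ha0 : a ≠ 0 := by
        apply Function.ne_iff.mpr
        refine ⟨σ ⟨0, hk⟩, ?_⟩
        have h1 : ((σ.symm (σ ⟨0, hk⟩) : Fin k) : ℕ) = 0 := by simp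
        by_cases h2 : z (σ ⟨0, hk⟩) < 0 <;>
          simp [hadef, h1, ht01, h2] <;> omega
      have hsq : ∀ j, a j ^ 2 = if ((σ.symm j : Fin k) : ℕ) < t0 then (1:ℝ) else 0 := by
        intro j
        by_cases h1 : ((σ.symm j : Fin k) : ℕ) < t0 <;>
          by_cases h2 : z j < 0 <;> simp [hadef, h1, h2]
      have hcardfil : ∑ i : Fin k, (if (i : ℕ) < t0 then (1:ℝ) else 0) = (t0 : ℝ) := by
        rw [← Finset.sum_filter, sum_filter_lt_eq ht0k (fun _ => (1:ℝ))]
        simp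
      have hsum2 : ∑ j, a j ^ 2 = (t0 : ℝ) := by
        rw [Finset.sum_congr rfl (fun j _ => hsq j),
          ← Equiv.sum_comp σ (fun j => if ((σ.symm j : Fin k) : ℕ) < t0 then (1:ℝ) else 0)]
        simpa using hcardfil
      have hnorm : euclNorm a = Real.sqrt t0 := by rw [euclNorm, hsum2]
      have hterm : ∀ j, a j * z j =
          (fun i : Fin k => if (i : ℕ) < t0 then |z (σ i)| else 0) (σ.symm j) := by
        intro j
        by_cases h1 : ((σ.symm j : Fin k) : ℕ) < t0
        · by_cases h2 : z j < 0
          · simp [hadef, h1, h2, abs_of_neg h2]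
          · simp [hadef, h1, h2, abs_of_nonneg (le_of_not_gt h2)]
        · simp [hadef, h1]
      have hinnerA : ∑ j, a j * z j = S t0 := by
        rw [Finset.sum_congr rfl (fun j _ => hterm j),
          Equiv.sum_comp σ.symm (fun i : Fin k => if (i : ℕ) < t0 then |z (σ i)| else 0)]
        rw [hSdef, ← Finset.sum_filter]
      have hval : euclInner ((euclNorm a)⁻¹ • a) z = f t0 := by
        rw [hnorm, euclInner]
        have : ∑ i, ((Real.sqrt t0)⁻¹ • a) i * z i
            = (Real.sqrt t0)⁻¹ * ∑ j, a j * z j := by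
          rw [Finset.mul_sum]
          exact Finset.sum_congr rfl fun j _ => by
            simp [Pi.smul_apply, smul_eq_mul, mul_assoc]
        rw [this, hinnerA, hfdef]
        simp [one_div]
      exact ⟨(euclNorm a)⁻¹ • a, ⟨a, ha, ha0, rfl⟩, hval.symm⟩
    · exact hub1
  refine ⟨f t0, hg1, ?_, ?_⟩
  · -- second IsGreatest
    constructor
    · exact ⟨t0, ht0T, rfl⟩
    · rintro x ⟨t, ht, rfl⟩
      exact ht0max t ht
  · -- IsLeast
    have hzpos := euclNorm_pos hz
    have hang : ∀ v ∈ Gamma k, angDist v z = 1 - euclInner v z / euclNorm z := by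
      rintro v ⟨b, hb, hb0, rfl⟩
      rw [angDist, euclNorm_unit hb0, one_mul]
    constructor
    · obtain ⟨v, hvG, hvx⟩ := hg1.1
      exact ⟨v, hvG, by rw [hang v hvG, ← hvx]⟩
    · rintro y ⟨v, hvG, rfl⟩
      rw [hang v hvG]
      have h := hg1.2 ⟨v, hvG, rfl⟩
      have h2 : euclInner v z / euclNorm z ≤ f t0 / euclNorm z := by gcongr
      linarith
end

section
/- (Approximation guarantee for the D-ary tessellation, Lemma 2 of the paper.) Let D be an integer with D > √k, let z ∈ ℝ^k with ‖z‖₂ = 1, and let ã ∈ ℝ^k be a vector with every coordinate in B_D satisfying |z_i − ã_i| ≤ 1/D for all i (the output of coordinate-wise rounding). Then ã ≠ 0; set a_z = ã/‖ã‖₂ ∈ Γ_D. If a* ∈ Γ_D satisfies d(a*, z) ≤ d(b, z) for all b ∈ Γ_D, then ‖a_z − a*‖₂ ≤ 4√k / D and d(a_z, a*) ≤ 8k / D². -/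
open Finset

/-- The `D`-ary base set `B_D = { h/D : h ∈ ℤ, |h| ≤ D }`. -/
def baseSetD (D : ℕ) : Set ℝ := {x | ∃ h : ℤ, |h| ≤ (D : ℤ) ∧ x = (h : ℝ) / D}

/-- The `D`-ary tessellating set `Γ_D = { a/‖a‖₂ : a ∈ (B_D)^k, a ≠ 0 }`. -/
noncomputable def GammaD (k D : ℕ) : Set (Fin k → ℝ) :=
  {v | ∃ a : Fin k → ℝ, (∀ i, a i ∈ baseSetD D) ∧ a ≠ 0 ∧ v = (euclNorm a)⁻¹ • a}

def toE {k : ℕ} (x : Fin k → ℝ) : EuclideanSpace ℝ (Fin k) := WithLp.toLp 2 x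

lemma toE_sub {k : ℕ} (x y : Fin k → ℝ) : toE (x - y) = toE x - toE y := by simp [toE]
lemma toE_smul {k : ℕ} (c : ℝ) (x : Fin k → ℝ) : toE (c • x) = c • toE x := by simp [toE]
lemma toE_zero {k : ℕ} {x : Fin k → ℝ} : toE x = 0 ↔ x = 0 := by simp [toE]

lemma euclNorm_toE {k : ℕ} (x : Fin k → ℝ) : euclNorm x = ‖toE x‖ := by
  rw [EuclideanSpace.norm_eq]
  simp [euclNorm, Real.norm_eq_abs, sq_abs, toE]

lemma euclInner_toE {k : ℕ} (x y : Fin k → ℝ) :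
    euclInner x y = inner ℝ (toE x) (toE y) := by
  simp [euclInner, PiLp.inner_apply, RCLike.inner_apply, conj_trivial, toE, mul_comm]

lemma angDist_unit {k : ℕ} (u v : Fin k → ℝ) (hu : euclNorm u = 1) (hv : euclNorm v = 1) :
    angDist u v = ‖toE u - toE v‖ ^ 2 / 2 := by
  have h := @norm_sub_sq_real (EuclideanSpace ℝ (Fin k)) _ _ (toE u) (toE v)
  rw [euclNorm_toE] at hu hv
  rw [angDist, euclNorm_toE, euclNorm_toE, hu, hv, euclInner_toE, h, hu, hv]
  ring

lemma euclNorm_normalize {k : ℕ} (x : Fin k → ℝ) (hx : x ≠ 0) :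
    euclNorm ((euclNorm x)⁻¹ • x) = 1 := by
  have hpos : 0 < euclNorm x := by
    rw [euclNorm_toE]; exact norm_pos_iff.mpr (fun h => hx (toE_zero.mp h))
  rw [euclNorm_toE, toE_smul, norm_smul, Real.norm_eq_abs, abs_of_pos (inv_pos.mpr hpos),
    ← euclNorm_toE]
  field_simp

/-- Lemma 2 of the paper: for `D > √k`, a unit vector `z`, and a coordinate-wise
rounding `ã` of `z` to `B_D` (so `|z_i − ã_i| ≤ 1/D` for all `i`), we have `ã ≠ 0`, the
normalization `a_z = ã/‖ã‖₂` lies in `Γ_D`, and for any `a* ∈ Γ_D` minimizing the angular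
distance to `z`, `‖a_z − a*‖₂ ≤ 4√k/D` and `d(a_z, a*) ≤ 8k/D²`. -/
theorem stmt_8 {k : ℕ} (D : ℕ) (hD : (D : ℝ) > Real.sqrt k)
    (z : Fin k → ℝ) (hz : euclNorm z = 1)
    (atil : Fin k → ℝ) (ha_base : ∀ i, atil i ∈ baseSetD D)
    (ha_round : ∀ i, |z i - atil i| ≤ 1 / D) :
    atil ≠ 0 ∧ (euclNorm atil)⁻¹ • atil ∈ GammaD k D ∧
    ∀ astar ∈ GammaD k D, (∀ b ∈ GammaD k D, angDist astar z ≤ angDist b z) →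
      euclNorm ((euclNorm atil)⁻¹ • atil - astar) ≤ 4 * Real.sqrt k / D ∧
      angDist ((euclNorm atil)⁻¹ • atil) astar ≤ 8 * k / D ^ 2 := by
  have hD0 : (0:ℝ) < D := lt_of_le_of_lt (Real.sqrt_nonneg k) hD
  set ε := euclNorm (z - atil) with hεdef
  have hε : ε ≤ Real.sqrt k / D := by
    have hsum : ∑ i, (z i - atil i) ^ 2 ≤ (k : ℝ) * (1 / D) ^ 2 := by
      calc ∑ i, (z i - atil i) ^ 2 ≤ ∑ _i : Fin k, (1 / (D:ℝ)) ^ 2 := by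
            apply Finset.sum_le_sum
            intro i _
            rw [← sq_abs]
            exact pow_le_pow_left₀ (abs_nonneg _) (ha_round i) 2
        _ = (k : ℝ) * (1 / D) ^ 2 := by simp [mul_comm]
    have := Real.sqrt_le_sqrt hsum
    rw [hεdef]
    calc euclNorm (z - atil) ≤ Real.sqrt ((k : ℝ) * (1 / D) ^ 2) := this
      _ = Real.sqrt k / D := by
          rw [Real.sqrt_mul (Nat.cast_nonneg k), Real.sqrt_sq (by positivity)]
          field_simp
  have hε1 : ε < 1 := lt_of_le_of_lt hε (by rw [div_lt_one hD0]; exact hD)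
  have hεnn : 0 ≤ ε := by rw [hεdef, euclNorm_toE]; exact norm_nonneg _
  have hnorm_lb : 1 - ε ≤ euclNorm atil := by
    have h1 : euclNorm z - euclNorm atil ≤ ε := by
      rw [hεdef, euclNorm_toE, euclNorm_toE, euclNorm_toE, toE_sub]
      exact (abs_le.mp (abs_norm_sub_norm_le (toE z) (toE atil))).2
    linarith [hz ▸ h1]
  have hnA : 0 < euclNorm atil := by linarith
  have hne : atil ≠ 0 := by
    intro h
    rw [h] at hnA
    simp [euclNorm] at hnA
  have hmem : (euclNorm atil)⁻¹ • atil ∈ GammaD k D := ⟨atil, ha_base, hne, rfl⟩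
  refine ⟨hne, hmem, ?_⟩
  intro astar hastar hmin
  obtain ⟨b, hb_base, hb0, rfl⟩ := hastar
  have hstar1 : euclNorm ((euclNorm b)⁻¹ • b) = 1 := euclNorm_normalize b hb0
  have haz1 : euclNorm ((euclNorm atil)⁻¹ • atil) = 1 := euclNorm_normalize atil hne
  set az := (euclNorm atil)⁻¹ • atil with hazdef
  set astar := (euclNorm b)⁻¹ • b with hasdef
  -- distance from az to z is ≤ 2ε
  have hAzZ : ‖toE az - toE z‖ ≤ 2 * ε := by
    have h1 : ‖toE az - toE atil‖ ≤ ε := by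
      have : toE az - toE atil = ((euclNorm atil)⁻¹ - 1) • toE atil := by
        rw [hazdef, toE_smul, sub_smul, one_smul]
      rw [this, norm_smul, Real.norm_eq_abs, ← euclNorm_toE]
      have hmul : ((euclNorm atil)⁻¹ - 1) * euclNorm atil = 1 - euclNorm atil := by
        field_simp
      have habs : |(euclNorm atil)⁻¹ - 1| * euclNorm atil = |1 - euclNorm atil| := by
        calc |(euclNorm atil)⁻¹ - 1| * euclNorm atil
            = |((euclNorm atil)⁻¹ - 1) * euclNorm atil| := by rw [abs_mul, abs_of_pos hnA]
          _ = |1 - euclNorm atil| := by rw [hmul]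
      rw [habs]
      have h2 : |euclNorm atil - euclNorm z| ≤ ε := by
        rw [hεdef, euclNorm_toE, euclNorm_toE, euclNorm_toE, toE_sub, norm_sub_rev]
        exact abs_norm_sub_norm_le (toE atil) (toE z)
      rw [abs_sub_comm] at h2
      rw [hz] at h2
      exact h2
    have h3 : ‖toE atil - toE z‖ ≤ ε := by
      rw [hεdef, euclNorm_toE, toE_sub, norm_sub_rev]
    calc ‖toE az - toE z‖ ≤ ‖toE az - toE atil‖ + ‖toE atil - toE z‖ :=
          norm_sub_le_norm_sub_add_norm_sub _ _ _
      _ ≤ ε + ε := add_le_add h1 h3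
      _ = 2 * ε := by ring
  -- minimality: ‖astar - z‖ ≤ ‖az - z‖
  have hmin' := hmin az hmem
  rw [angDist_unit astar z hstar1 hz, angDist_unit az z haz1 hz] at hmin'
  have hsq : ‖toE astar - toE z‖ ^ 2 ≤ ‖toE az - toE z‖ ^ 2 := by linarith
  have hAsZ : ‖toE astar - toE z‖ ≤ ‖toE az - toE z‖ := by
    exact (pow_le_pow_iff_left₀ (norm_nonneg _) (norm_nonneg _) (by norm_num)).mp hsq
  have hmain : ‖toE az - toE astar‖ ≤ 4 * Real.sqrt k / D := by
    calc ‖toE az - toE astar‖ ≤ ‖toE az - toE z‖ + ‖toE z - toE astar‖ :=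
          norm_sub_le_norm_sub_add_norm_sub _ _ _
      _ = ‖toE az - toE z‖ + ‖toE astar - toE z‖ := by rw [norm_sub_rev (toE z)]
      _ ≤ 2 * ε + 2 * ε := add_le_add (le_trans hAzZ (le_refl _)) (le_trans hAsZ hAzZ)
      _ = 4 * ε := by ring
      _ ≤ 4 * (Real.sqrt k / D) := by linarith
      _ = 4 * Real.sqrt k / D := by ring
  constructor
  · rw [euclNorm_toE, toE_sub]; exact hmain
  · rw [angDist_unit az astar haz1 hstar1]
    have hnn : (0:ℝ) ≤ ‖toE az - toE astar‖ := norm_nonneg _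
    have h4 : ‖toE az - toE astar‖ ^ 2 ≤ (4 * Real.sqrt k / D) ^ 2 :=
      pow_le_pow_left₀ hnn hmain 2
    have h5 : (4 * Real.sqrt k / D) ^ 2 = 16 * k / D ^ 2 := by
      rw [div_pow, mul_pow, Real.sq_sqrt (Nat.cast_nonneg k)]
      norm_num
    rw [h5] at h4
    have h6 : 16 * (k:ℝ) / (D:ℝ) ^ 2 / 2 = 8 * (k:ℝ) / (D:ℝ) ^ 2 := by ring
    rw [← h6]
    gcongr
end

section
/- (Nearest-neighbor distance in the ternary tessellation.) Let a ∈ {-1,0,1}^k be a nonzero ternary vector with exactly t nonzero entries, where t < k. Then the minimum of the angular distance d(a, b) over all nonzero ternary vectors b ∈ {-1,0,1}^k with b ≠ a equals 1 − √( t / (t + 1) ). In particular, the distance from a tessellating vector in Γ to its nearest distinct tessellating vector depends only on the number t of nonzero entries of its unnormalized ternary representative. -/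
open Finset

lemma tern_cases {x : ℝ} (hx : x ∈ ({-1, 0, 1} : Set ℝ)) : x = -1 ∨ x = 0 ∨ x = 1 := by
  simpa using hx

lemma tern_sq {x : ℝ} (hx : x ∈ ({-1, 0, 1} : Set ℝ)) (h : x ≠ 0) : x ^ 2 = 1 := by
  rcases tern_cases hx with h1 | h1 | h1 <;> subst h1 <;> simp_all

lemma tern_mul_le_one {x y : ℝ} (hx : x ∈ ({-1,0,1} : Set ℝ)) (hy : y ∈ ({-1,0,1} : Set ℝ)) :
    x * y ≤ 1 := by
  rcases tern_cases hx with h|h|h <;> rcases tern_cases hy with h'|h'|h' <;>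
    subst h <;> subst h' <;> norm_num

lemma tern_mul_nonpos {x y : ℝ} (hx : x ∈ ({-1,0,1} : Set ℝ)) (hy : y ∈ ({-1,0,1} : Set ℝ))
    (hxy : y ≠ x) (hy0 : y ≠ 0) : x * y ≤ 0 := by
  rcases tern_cases hx with h|h|h <;> rcases tern_cases hy with h'|h'|h' <;>
    subst h <;> subst h' <;> norm_num at *

lemma sum_sq_eq_card {k : ℕ} (x : Fin k → ℝ) (hx : ∀ i, x i ∈ ({-1,0,1} : Set ℝ)) :
    ∑ i, x i ^ 2 = ((univ.filter fun i => x i ≠ 0).card : ℝ) := by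
  rw [← Finset.sum_boole]
  refine Finset.sum_congr rfl fun i _ => ?_
  by_cases h : x i = 0
  · simp [h]
  · simp [h, tern_sq (hx i) h]

lemma norm_eq_sqrt_card {k : ℕ} (x : Fin k → ℝ) (hx : ∀ i, x i ∈ ({-1,0,1} : Set ℝ)) :
    euclNorm x = Real.sqrt ((univ.filter fun i => x i ≠ 0).card : ℝ) := by
  rw [euclNorm, sum_sq_eq_card x hx]

lemma inner_le_card {k : ℕ} (a b : Fin k → ℝ) (ha : ∀ i, a i ∈ ({-1,0,1} : Set ℝ))
    (hb : ∀ i, b i ∈ ({-1,0,1} : Set ℝ)) :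
    euclInner a b ≤ ((univ.filter fun i => a i ≠ 0 ∧ b i ≠ 0).card : ℝ) := by
  rw [← Finset.sum_boole, euclInner]
  refine Finset.sum_le_sum fun i _ => ?_
  by_cases h : a i ≠ 0 ∧ b i ≠ 0
  · rw [if_pos h]
    exact tern_mul_le_one (ha i) (hb i)
  · have : a i = 0 ∨ b i = 0 := by tauto
    rcases this with h0 | h0 <;> simp [h, h0]

lemma inner_le_sub_one {k : ℕ} (a b : Fin k → ℝ) (ha : ∀ i, a i ∈ ({-1,0,1} : Set ℝ))
    (hb : ∀ i, b i ∈ ({-1,0,1} : Set ℝ)) (hab : b ≠ a)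
    (hB : (univ.filter fun i => b i ≠ 0).card ≤ (univ.filter fun i => a i ≠ 0).card) :
    euclInner a b ≤ ((univ.filter fun i => a i ≠ 0).card : ℝ) - 1 := by
  obtain ⟨i₀, hi₀⟩ := Function.ne_iff.mp hab
  have step1 : euclInner a b ≤
      ((univ.filter fun i => (a i ≠ 0 ∧ b i ≠ 0) ∧ i ≠ i₀).card : ℝ) := by
    rw [← Finset.sum_boole, euclInner]
    refine Finset.sum_le_sum fun i _ => ?_
    by_cases hii : i = i₀
    · subst hii
      rw [if_neg (by simp)]
      by_cases hb0 : b i = 0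
      · simp [hb0]
      · exact tern_mul_nonpos (ha i) (hb i) hi₀ hb0
    · by_cases h : a i ≠ 0 ∧ b i ≠ 0
      · rw [if_pos ⟨h, hii⟩]; exact tern_mul_le_one (ha i) (hb i)
      · rw [if_neg (by tauto)]
        have : a i = 0 ∨ b i = 0 := by tauto
        rcases this with h0 | h0 <;> simp [h0]
  have step2 : (univ.filter fun i => (a i ≠ 0 ∧ b i ≠ 0) ∧ i ≠ i₀).card + 1 ≤
      (univ.filter fun i => a i ≠ 0).card := by
    by_cases hb0 : b i₀ = 0
    · have hai₀ : a i₀ ≠ 0 := by rw [hb0] at hi₀; exact fun h => hi₀ h.symm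
      have hmem : i₀ ∈ univ.filter fun i => a i ≠ 0 := by simp [hai₀]
      have hsub : (univ.filter fun i => (a i ≠ 0 ∧ b i ≠ 0) ∧ i ≠ i₀) ⊆
          (univ.filter fun i => a i ≠ 0).erase i₀ := by
        intro i hi
        simp only [mem_filter, mem_univ, true_and] at hi
        exact Finset.mem_erase.mpr ⟨hi.2, by simp [hi.1.1]⟩
      have := Finset.card_le_card hsub
      rw [Finset.card_erase_of_mem hmem] at this
      have hpos : 0 < (univ.filter fun i => a i ≠ 0).card := Finset.card_pos.mpr ⟨i₀, hmem⟩
      omega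
    · have hmem : i₀ ∈ univ.filter fun i => b i ≠ 0 := by simp [hb0]
      have hsub : (univ.filter fun i => (a i ≠ 0 ∧ b i ≠ 0) ∧ i ≠ i₀) ⊆
          (univ.filter fun i => b i ≠ 0).erase i₀ := by
        intro i hi
        simp only [mem_filter, mem_univ, true_and] at hi
        exact Finset.mem_erase.mpr ⟨hi.2, by simp [hi.1.2]⟩
      have := Finset.card_le_card hsub
      rw [Finset.card_erase_of_mem hmem] at this
      have hpos : 0 < (univ.filter fun i => b i ≠ 0).card := Finset.card_pos.mpr ⟨i₀, hmem⟩
      omega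
  have : ((univ.filter fun i => (a i ≠ 0 ∧ b i ≠ 0) ∧ i ≠ i₀).card : ℝ) ≤
      ((univ.filter fun i => a i ≠ 0).card : ℝ) - 1 := by
    have h := step2
    have : ((univ.filter fun i => (a i ≠ 0 ∧ b i ≠ 0) ∧ i ≠ i₀).card + 1 : ℝ) ≤
        ((univ.filter fun i => a i ≠ 0).card : ℝ) := by exact_mod_cast h
    linarith
  linarith

/-- nearest-neighbor distance in the ternary tessellation: for a nonzero
ternary vector `a` with exactly `t < k` nonzero entries, the minimum of `d(a, b)` over all
nonzero ternary vectors `b ≠ a` equals `1 − √(t/(t+1))`. -/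
theorem stmt_11 {k : ℕ} (a : Fin k → ℝ)
    (ha_ternary : ∀ i, a i ∈ ({-1, 0, 1} : Set ℝ)) (ha_ne : a ≠ 0)
    (t : ℕ) (hta : (Finset.univ.filter fun i => a i ≠ 0).card = t) (htk : t < k) :
    IsLeast {x : ℝ | ∃ b : Fin k → ℝ, (∀ i, b i ∈ ({-1, 0, 1} : Set ℝ)) ∧
        b ≠ 0 ∧ b ≠ a ∧ x = angDist a b}
      (1 - Real.sqrt ((t : ℝ) / ((t : ℝ) + 1))) := by
  have ht1 : 1 ≤ t := by
    obtain ⟨i, hi⟩ := Function.ne_iff.mp ha_ne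
    have hi' : a i ≠ 0 := by simpa using hi
    have hmem : i ∈ univ.filter fun i => a i ≠ 0 := by simp [hi']
    have := Finset.card_pos.mpr ⟨i, hmem⟩
    omega
  have htR : (0:ℝ) < t := by exact_mod_cast ht1
  have hnorm_a : euclNorm a = Real.sqrt t := by
    rw [norm_eq_sqrt_card a ha_ternary, hta]
  have hsqrt_t_pos : 0 < Real.sqrt t := Real.sqrt_pos.mpr htR
  have hsqrt_t1_pos : 0 < Real.sqrt ((t:ℝ)+1) := Real.sqrt_pos.mpr (by linarith)
  have hdiv : Real.sqrt ((t:ℝ) / ((t:ℝ)+1)) = Real.sqrt t / Real.sqrt ((t:ℝ)+1) :=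
    Real.sqrt_div htR.le _
  constructor
  · -- membership
    obtain ⟨j, hj⟩ : ∃ j, a j = 0 := by
      by_contra h
      push_neg at h
      have heq : (univ.filter fun i => a i ≠ 0) = univ :=
        Finset.filter_true_of_mem (fun i _ => h i)
      rw [heq, Finset.card_univ, Fintype.card_fin] at hta
      omega
    refine ⟨Function.update a j 1, ?_, ?_, ?_, ?_⟩
    · intro i
      by_cases hij : i = j
      · subst hij; rw [Function.update_self]; simp
      · rw [Function.update_of_ne hij]; exact ha_ternary i
    · intro h0
      have := congrFun h0 j
      rw [Function.update_self] at this
      simpa using this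
    · intro hba
      have := congrFun hba j
      rw [Function.update_self, hj] at this
      simpa using this
    · have hbt : ∀ i, Function.update a j 1 i ∈ ({-1,0,1} : Set ℝ) := by
        intro i
        by_cases hij : i = j
        · subst hij; rw [Function.update_self]; simp
        · rw [Function.update_of_ne hij]; exact ha_ternary i
      have h1 : euclInner a (Function.update a j 1) = t := by
        rw [euclInner]
        have heq : ∀ i, a i * Function.update a j 1 i = a i ^ 2 := by
          intro i
          by_cases hij : i = j
          · subst hij; rw [Function.update_self, hj]; ring
          · rw [Function.update_of_ne hij]; ring
        rw [Finset.sum_congr rfl fun i _ => heq i, sum_sq_eq_card a ha_ternary, hta]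
      have h2 : (univ.filter fun i => Function.update a j 1 i ≠ 0) =
          insert j (univ.filter fun i => a i ≠ 0) := by
        ext i
        simp only [mem_filter, mem_univ, true_and, Finset.mem_insert]
        by_cases hij : i = j
        · subst hij; rw [Function.update_self]; simp
        · rw [Function.update_of_ne hij]; simp [hij]
      have h3 : euclNorm (Function.update a j 1) = Real.sqrt ((t:ℝ)+1) := by
        rw [norm_eq_sqrt_card _ hbt, h2,
          Finset.card_insert_of_notMem (by simp [hj]), hta]
        norm_num
      rw [angDist, h1, hnorm_a, h3, hdiv]
      congr 1
      have hst : Real.sqrt t * Real.sqrt t = t := Real.mul_self_sqrt htR.le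
      rw [div_eq_div_iff hsqrt_t1_pos.ne'
        (by positivity : Real.sqrt t * Real.sqrt ((t:ℝ)+1) ≠ 0)]
      linear_combination Real.sqrt ((t:ℝ)+1) * hst
  · -- lower bound
    rintro x ⟨b, hbt, hb0, hba, rfl⟩
    set s := (univ.filter fun i => b i ≠ 0).card with hsdef
    have hs1 : 1 ≤ s := by
      obtain ⟨i, hi⟩ := Function.ne_iff.mp hb0
      have hi' : b i ≠ 0 := by simpa using hi
      have hmem : i ∈ univ.filter fun i => b i ≠ 0 := by simp [hi']
      have := Finset.card_pos.mpr ⟨i, hmem⟩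
      omega
    have hsR : (0:ℝ) < s := by exact_mod_cast hs1
    have hnorm_b : euclNorm b = Real.sqrt s := norm_eq_sqrt_card b hbt
    have hsqrt_s_pos : 0 < Real.sqrt s := Real.sqrt_pos.mpr hsR
    rw [angDist, hnorm_a, hnorm_b]
    have key : euclInner a b / (Real.sqrt t * Real.sqrt s) ≤
        Real.sqrt ((t:ℝ) / ((t:ℝ)+1)) := by
      rcases le_or_gt (euclInner a b) 0 with hm | hm
      · exact le_trans (div_nonpos_of_nonpos_of_nonneg hm (by positivity))
          (Real.sqrt_nonneg _)
      · -- inner products bounds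
        have hcardAB_s : ((univ.filter fun i => a i ≠ 0 ∧ b i ≠ 0).card : ℝ) ≤ s := by
          have : (univ.filter fun i => a i ≠ 0 ∧ b i ≠ 0) ⊆
              (univ.filter fun i => b i ≠ 0) := by
            intro i hi; simp only [mem_filter, mem_univ, true_and] at hi ⊢; exact hi.2
          exact_mod_cast Finset.card_le_card this
        have hcardAB_t : ((univ.filter fun i => a i ≠ 0 ∧ b i ≠ 0).card : ℝ) ≤ t := by
          have h : (univ.filter fun i => a i ≠ 0 ∧ b i ≠ 0) ⊆
              (univ.filter fun i => a i ≠ 0) := by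
            intro i hi; simp only [mem_filter, mem_univ, true_and] at hi ⊢; exact hi.1
          have := Finset.card_le_card h
          rw [hta] at this
          exact_mod_cast this
        have hms : euclInner a b ≤ s := le_trans (inner_le_card a b ha_ternary hbt) hcardAB_s
        have hmt : euclInner a b ≤ t := le_trans (inner_le_card a b ha_ternary hbt) hcardAB_t
        rw [div_le_iff₀ (by positivity), hdiv]
        have hfold : Real.sqrt t / Real.sqrt ((t:ℝ)+1) * (Real.sqrt t * Real.sqrt s) =
            Real.sqrt ((t:ℝ) * t * s / ((t:ℝ)+1)) := by
          rw [Real.sqrt_div (by positivity), Real.sqrt_mul (by positivity),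
            Real.sqrt_mul htR.le]
          ring
        rw [hfold]
        have hsq : (euclInner a b) ^ 2 ≤ (t:ℝ) * t * s / ((t:ℝ)+1) := by
          rw [le_div_iff₀ (by positivity)]
          rcases le_or_gt ((t:ℝ)+1) s with hst | hst
          · nlinarith [mul_le_mul hmt hmt hm.le htR.le,
              mul_nonneg (mul_nonneg htR.le htR.le)
                (sub_nonneg.mpr hst)]
          · -- s ≤ t (integers)
            have hstn : s ≤ t := by
              have : (s:ℝ) < (t:ℝ)+1 := hst
              exact_mod_cast Nat.lt_succ_iff.mp (by exact_mod_cast this)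
            have hm1 : euclInner a b ≤ (t:ℝ) - 1 := by
              have := inner_le_sub_one a b ha_ternary hbt hba (by rw [hta]; exact hstn)
              rwa [hta] at this
            have hsRt : (s:ℝ) ≤ t := by exact_mod_cast hstn
            have ht1R : (1:ℝ) ≤ t := by exact_mod_cast ht1
            rcases le_or_gt (s:ℝ) ((t:ℝ)-1) with hcase | hcase
            · nlinarith [mul_le_mul hms hms hm.le hsR.le,
                mul_nonneg hsR.le (mul_nonneg (sub_nonneg.mpr hcase)
                  (by positivity : (0:ℝ) ≤ (t:ℝ)+1))]
            · have htm1 : (0:ℝ) ≤ (t:ℝ) - 1 := le_trans hm.le hm1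
              nlinarith [mul_le_mul hm1 hm1 hm.le htm1,
                mul_nonneg (mul_nonneg htR.le htR.le)
                  (sub_nonneg.mpr hcase.le)]
        calc euclInner a b = Real.sqrt ((euclInner a b)^2) :=
              (Real.sqrt_sq hm.le).symm
          _ ≤ _ := Real.sqrt_le_sqrt hsq
    linarith
end
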